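/- (Gentle measurement lemma.) Let ρ be a positive semidefinite d×d complex matrix with trace 1, let Λ be a Hermitian d×d matrix with 0 ≤ Λ ≤ I, and suppose tr(Λ ρ) ≥ 1 - ε for some ε ∈ [0, 1]. Then the trace norm of the Hermitian matrix ρ - √Λ ρ √Λ, i.e. the sum of the absolute values of its eigenvalues, is at most 2√ε. -/

import Mathlib

open Matrix
open scoped ComplexOrder

/-- The positive semidefinite square root of a positive semidefinite matrix
(the definition `Matrix.PosSemidef.sqrt` of the older Mathlib, removed since). -/
noncomputable def Matrix.PosSemidef.sqrt {n : Type*} [Fintype n] [DecidableEq n]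
    {𝕜 : Type*} [RCLike 𝕜] {A : Matrix n n 𝕜} (hA : A.PosSemidef) : Matrix n n 𝕜 :=
  hA.1.eigenvectorUnitary.1 * diagonal ((↑) ∘ (√·) ∘ hA.1.eigenvalues) *
  (star hA.1.eigenvectorUnitary : Matrix n n 𝕜)

lemma psd_sqrt_spec {d : ℕ} {A : Matrix (Fin d) (Fin d) ℂ} (hA : A.PosSemidef) :
    hA.sqrt.PosSemidef ∧ hA.sqrt * hA.sqrt = A := by
  set U : Matrix (Fin d) (Fin d) ℂ := (hA.1.eigenvectorUnitary : Matrix (Fin d) (Fin d) ℂ)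
  have hU : star U * U = 1 := Unitary.star_mul_self_of_mem hA.1.eigenvectorUnitary.2
  have hs : hA.sqrt = U * diagonal ((↑) ∘ (√·) ∘ hA.1.eigenvalues) * star U := rfl
  constructor
  · rw [hs, Matrix.star_eq_conjTranspose]
    apply Matrix.PosSemidef.mul_mul_conjTranspose_same
    rw [Matrix.posSemidef_diagonal_iff]
    intro j
    simp only [Function.comp_apply]
    exact_mod_cast Real.sqrt_nonneg _
  · have hΛs : A = U * diagonal (RCLike.ofReal ∘ hA.1.eigenvalues) * star U := by
      have := hA.1.spectral_theorem
      rw [Unitary.conjStarAlgAut_apply] at this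
      exact this
    rw [hs]
    conv_rhs => rw [hΛs]
    have hUU : ∀ X Y : Matrix (Fin d) (Fin d) ℂ,
        (U * X * star U) * (U * Y * star U) = U * (X * Y) * star U := by
      intro X Y
      simp only [Matrix.mul_assoc]
      rw [← Matrix.mul_assoc (star U) U, hU, Matrix.one_mul]
    rw [hUU, Matrix.diagonal_mul_diagonal]
    refine congrArg (fun M => U * M * star U) (congrArg diagonal (funext fun j => ?_))
    simp only [Function.comp_apply, ← RCLike.ofReal_mul,
      Real.mul_self_sqrt (hA.eigenvalues_nonneg j)]
    exact (Complex.ofReal_mul _ _).symm.trans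
      (congrArg Complex.ofReal (Real.mul_self_sqrt (hA.eigenvalues_nonneg j)))

section Aux

variable {d : ℕ}

lemma psd_trace_nonneg {M : Matrix (Fin d) (Fin d) ℂ} (hM : M.PosSemidef) :
    0 ≤ M.trace := by
  rw [Matrix.trace]
  apply Finset.sum_nonneg
  intro i _
  have := hM.dotProduct_mulVec_nonneg (Pi.single i 1)
  simpa [dotProduct, Matrix.mulVec_single, Pi.single_apply, Finset.sum_ite_eq]
    using this

lemma psd_trace_mul_nonneg {P Q : Matrix (Fin d) (Fin d) ℂ}
    (hP : P.PosSemidef) (hQ : Q.PosSemidef) : 0 ≤ (P * Q).trace := by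
  have h1 : P = hP.sqrt * hP.sqrt := (psd_sqrt_spec hP).2.symm
  have h2 : (P * Q).trace = (hP.sqrt * Q * hP.sqrt).trace := by
    conv_lhs => rw [h1]
    exact (trace_mul_cycle hP.sqrt Q hP.sqrt).symm
  rw [h2]
  have := (hQ.mul_mul_conjTranspose_same hP.sqrt)
  rw [(psd_sqrt_spec hP).1.1.eq] at this
  exact psd_trace_nonneg this

lemma trace_conjTranspose_mul_self_re (X : Matrix (Fin d) (Fin d) ℂ) :
    (Xᴴ * X).trace.re = ∑ p : Fin d × Fin d, ‖X p.2 p.1‖ ^ 2 := by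
  rw [Fintype.sum_prod_type]
  simp only [Matrix.trace, Matrix.diag, Matrix.mul_apply, Matrix.conjTranspose_apply,
    Complex.re_sum]
  congr 1; ext j; congr 1; ext i
  rw [RCLike.star_def, ← Complex.normSq_eq_conj_mul_self, Complex.normSq_eq_norm_sq]
  simp [← Complex.ofReal_pow]

lemma trace_cauchy_schwarz (X Y : Matrix (Fin d) (Fin d) ℂ) :
    ‖(Xᴴ * Y).trace‖ ≤
      Real.sqrt (Xᴴ * X).trace.re * Real.sqrt (Yᴴ * Y).trace.re := by
  classical
  let x : EuclideanSpace ℂ (Fin d × Fin d) := WithLp.toLp 2 (fun p => X p.2 p.1)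
  let y : EuclideanSpace ℂ (Fin d × Fin d) := WithLp.toLp 2 (fun p => Y p.2 p.1)
  have hinner : (Xᴴ * Y).trace = inner ℂ x y := by
    rw [PiLp.inner_apply]
    rw [Fintype.sum_prod_type]
    simp [Matrix.trace, Matrix.diag, Matrix.mul_apply, Matrix.conjTranspose_apply,
      RCLike.inner_apply, x, y, mul_comm]
  have hx : ‖x‖ = Real.sqrt ((Xᴴ * X).trace.re) := by
    rw [EuclideanSpace.norm_eq, trace_conjTranspose_mul_self_re]
  have hy : ‖y‖ = Real.sqrt ((Yᴴ * Y).trace.re) := by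
    rw [EuclideanSpace.norm_eq, trace_conjTranspose_mul_self_re]
  calc ‖(Xᴴ * Y).trace‖ = ‖inner ℂ x y‖ := by
        rw [hinner]
    _ ≤ ‖x‖ * ‖y‖ := norm_inner_le_norm x y
    _ = _ := by rw [hx, hy]

lemma eigenvalues_le_one {Λ : Matrix (Fin d) (Fin d) ℂ} (hΛ : Λ.IsHermitian)
    (h1 : (1 - Λ).PosSemidef) (i : Fin d) : hΛ.eigenvalues i ≤ 1 := by
  have hv := hΛ.mulVec_eigenvectorBasis i
  set v : Fin d → ℂ := ⇑(hΛ.eigenvectorBasis i) with hvdef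
  have hvv : dotProduct (star v) v = 1 := by
    have h := (orthonormal_iff_ite.mp hΛ.eigenvectorBasis.orthonormal) i i
    rw [EuclideanSpace.inner_eq_star_dotProduct] at h
    rw [dotProduct_comm]
    simpa [hvdef] using h
  have h2 := h1.dotProduct_mulVec_nonneg v
  rw [Matrix.sub_mulVec, Matrix.one_mulVec, hv] at h2
  rw [RCLike.real_smul_eq_coe_smul (K := ℂ)] at h2
  rw [dotProduct_sub, dotProduct_smul, hvv] at h2
  have h3 : (0 : ℂ) ≤ ((1 - hΛ.eigenvalues i : ℝ) : ℂ) := by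
    push_cast
    simpa using h2
  rw [Complex.zero_le_real] at h3
  linarith

lemma sqrt_sub_posSemidef {Λ : Matrix (Fin d) (Fin d) ℂ} (hΛ : Λ.PosSemidef)
    (h1 : (1 - Λ).PosSemidef) : (hΛ.sqrt - Λ).PosSemidef := by
  set U : Matrix (Fin d) (Fin d) ℂ := (hΛ.1.eigenvectorUnitary : Matrix (Fin d) (Fin d) ℂ)
  have hs : hΛ.sqrt = U * diagonal ((↑) ∘ Real.sqrt ∘ hΛ.1.eigenvalues) * star U := rfl
  have hΛs : Λ = U * diagonal (RCLike.ofReal ∘ hΛ.1.eigenvalues) * star U := by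
    have := hΛ.1.spectral_theorem
    rw [Unitary.conjStarAlgAut_apply] at this
    exact this
  have key : hΛ.sqrt - Λ =
      U * diagonal (fun j => ((Real.sqrt (hΛ.1.eigenvalues j) - hΛ.1.eigenvalues j : ℝ) : ℂ))
        * star U := by
    conv_lhs => rw [hs]
    conv_lhs => rhs; rw [hΛs]
    rw [← Matrix.sub_mul, ← Matrix.mul_sub, Matrix.diagonal_sub]
    congr 1
    congr 1
    funext j
    simp [Pi.sub_apply, Function.comp]
  rw [key, Matrix.star_eq_conjTranspose]
  apply Matrix.PosSemidef.mul_mul_conjTranspose_same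
  rw [Matrix.posSemidef_diagonal_iff]
  intro j
  rw [Complex.zero_le_real]
  have h0 := hΛ.eigenvalues_nonneg j
  have hle := eigenvalues_le_one hΛ.1 h1 j
  have hs1 : Real.sqrt (hΛ.1.eigenvalues j) ≤ 1 := Real.sqrt_le_one.mpr hle
  have hsq : Real.sqrt (hΛ.1.eigenvalues j) ^ 2 = hΛ.1.eigenvalues j := Real.sq_sqrt h0
  nlinarith [Real.sqrt_nonneg (hΛ.1.eigenvalues j)]

lemma sandwich_mul {V P Q : Matrix (Fin d) (Fin d) ℂ} (hV : Vᴴ * V = 1) :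
    (V * P * Vᴴ) * (V * Q * Vᴴ) = V * (P * Q) * Vᴴ := by
  have h : ∀ X : Matrix (Fin d) (Fin d) ℂ, Vᴴ * (V * X) = X := fun X => by
    rw [← Matrix.mul_assoc, hV, Matrix.one_mul]
  simp only [Matrix.mul_assoc, h]

lemma sandwich_trace {V P : Matrix (Fin d) (Fin d) ℂ} (hV : Vᴴ * V = 1) :
    (V * P * Vᴴ).trace = P.trace := by
  rw [trace_mul_cycle, hV, Matrix.one_mul]

end Aux

/-- Gentle measurement lemma: if `0 ≤ Λ ≤ I` and `tr(Λρ) ≥ 1 - ε` for a density matrix `ρ`,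
then the trace norm of `ρ - √Λ ρ √Λ` is at most `2√ε`. -/


theorem gentle_measurement_lemma
    (d : ℕ) (ρ Λ : Matrix (Fin d) (Fin d) ℂ)
    (hρ : ρ.PosSemidef) (hτ : ρ.trace = 1)
    (hΛ : Λ.PosSemidef) (hΛ' : (1 - Λ).PosSemidef)
    (ε : ℝ) (hε0 : 0 ≤ ε) (hε1 : ε ≤ 1)
    (hsucc : 1 - ε ≤ ((Λ * ρ).trace).re)
    (A : Matrix (Fin d) (Fin d) ℂ)
    (hA : A = ρ - hΛ.sqrt * ρ * hΛ.sqrt)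
    (hAh : A.IsHermitian) :
    ∑ i, |hAh.eigenvalues i| ≤ 2 * Real.sqrt ε := by
  classical
  set S : Matrix (Fin d) (Fin d) ℂ := hΛ.sqrt with hSdef
  set R : Matrix (Fin d) (Fin d) ℂ := hρ.sqrt with hRdef
  have hShe : Sᴴ = S := (psd_sqrt_spec hΛ).1.1
  have hRhe : Rᴴ = R := (psd_sqrt_spec hρ).1.1
  have hSS : S * S = Λ := (psd_sqrt_spec hΛ).2
  have hRR : R * R = ρ := (psd_sqrt_spec hρ).2
  set B : Matrix (Fin d) (Fin d) ℂ := 1 - S with hBdef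
  have hBhe : Bᴴ = B := by
    rw [hBdef, Matrix.conjTranspose_sub, Matrix.conjTranspose_one, hShe]
  -- the sign matrix C
  set lam : Fin d → ℝ := hAh.eigenvalues with hlam
  set c : Fin d → ℝ := fun i => if lam i < 0 then -1 else 1 with hc
  have hc2 : ∀ i, c i * c i = 1 := by
    intro i; by_cases h : lam i < 0 <;> simp [hc, h]
  have hcabs : ∀ i, c i * lam i = |lam i| := by
    intro i
    by_cases h : lam i < 0
    · rw [abs_of_neg h]; simp [hc, h]
    · rw [abs_of_nonneg (not_lt.mp h)]; simp [hc, h]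
  set V : Matrix (Fin d) (Fin d) ℂ := (hAh.eigenvectorUnitary : Matrix (Fin d) (Fin d) ℂ)
    with hV
  have hV1 : Vᴴ * V = 1 := by
    rw [← Matrix.star_eq_conjTranspose]; exact hAh.eigenvectorUnitary.2.1
  have hV2 : V * Vᴴ = 1 := by
    rw [← Matrix.star_eq_conjTranspose]; exact hAh.eigenvectorUnitary.2.2
  set D : Matrix (Fin d) (Fin d) ℂ := diagonal (fun i => (c i : ℂ)) with hD
  set C : Matrix (Fin d) (Fin d) ℂ := V * D * Vᴴ with hC
  have hDhe : Dᴴ = D := by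
    rw [hD, Matrix.diagonal_conjTranspose]
    congr 1
    funext i
    simp [Pi.star_def]
  have hChe : Cᴴ = C := by
    rw [hC, Matrix.conjTranspose_mul, Matrix.conjTranspose_mul, hDhe,
      Matrix.conjTranspose_conjTranspose, Matrix.mul_assoc]
  have hDD : D * D = 1 := by
    rw [hD, Matrix.diagonal_mul_diagonal]
    rw [show (fun i => (c i : ℂ) * (c i : ℂ)) = fun _ => (1 : ℂ) by
      funext i
      rw [← Complex.ofReal_mul, hc2 i, Complex.ofReal_one]]
    exact Matrix.diagonal_one
  have hCC : C * C = 1 := by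
    rw [hC, sandwich_mul hV1, hDD, Matrix.mul_one, hV2]
  -- trace of C * A is the sum of |eigenvalues|
  have hAspec := hAh.spectral_theorem
  rw [Unitary.conjStarAlgAut_apply, Matrix.star_eq_conjTranspose] at hAspec
  have hCA : (C * A).trace = ((∑ i, |lam i| : ℝ) : ℂ) := by
    have e1 : (C * A).trace = (C * (V * diagonal (RCLike.ofReal ∘ lam) * Vᴴ)).trace :=
      congrArg (fun M => (C * M).trace) hAspec
    rw [e1, hC, sandwich_mul hV1, sandwich_trace hV1, Matrix.diagonal_mul_diagonal,
      Matrix.trace_diagonal]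
    simp only [Function.comp]
    push_cast
    refine Finset.sum_congr rfl fun i _ => ?_
    rw [← hcabs i]
    push_cast
    rfl
  -- helper rewrites
  have hCCX : ∀ X : Matrix (Fin d) (Fin d) ℂ, C * (C * X) = X := fun X => by
    rw [← Matrix.mul_assoc, hCC, Matrix.one_mul]
  have hRRX : ∀ X : Matrix (Fin d) (Fin d) ℂ, R * (R * X) = ρ * X := fun X => by
    rw [← Matrix.mul_assoc, hRR]
  have hSSX : ∀ X : Matrix (Fin d) (Fin d) ℂ, S * (S * X) = Λ * X := fun X => by
    rw [← Matrix.mul_assoc, hSS]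
  -- decomposition
  have hdecomp : C * A = C * (ρ * B) + C * (B * (ρ * S)) := by
    rw [hA, hBdef]; noncomm_ring
  set t1 : ℂ := (C * (ρ * B)).trace with ht1def
  set t2 : ℂ := (C * (B * (ρ * S))).trace with ht2def
  -- quantities
  set q : ℂ := (B * (B * ρ)).trace with hqdef
  set r : ℝ := ((Λ * ρ).trace).re with hrdef
  -- r ≤ 1
  have hr1 : r ≤ 1 := by
    have h0 := psd_trace_mul_nonneg hΛ' hρ
    rw [Complex.le_def] at h0
    have h1 : ((1 - Λ) * ρ).trace = ρ.trace - (Λ * ρ).trace := by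
      rw [Matrix.sub_mul, Matrix.one_mul, trace_sub]
    rw [h1, hτ] at h0
    have h2 := h0.1
    rw [Complex.sub_re, Complex.one_re, Complex.zero_re] at h2
    rw [hrdef]; linarith
  -- q.re ≤ ε
  have hq : q.re ≤ ε := by
    have hid : B * (B * ρ) = ρ + Λ * ρ - (S * ρ + S * ρ) := by
      rw [hBdef, ← hSS]; noncomm_ring
    have hq1 : q = ρ.trace + (Λ * ρ).trace - ((S * ρ).trace + (S * ρ).trace) := by
      rw [hqdef, hid, trace_sub, trace_add, trace_add]
    have hu := psd_trace_mul_nonneg (sqrt_sub_posSemidef hΛ hΛ') hρ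
    rw [Complex.le_def] at hu
    have hu1 : ((hΛ.sqrt - Λ) * ρ).trace = (S * ρ).trace - (Λ * ρ).trace := by
      rw [← hSdef, Matrix.sub_mul, trace_sub]
    rw [hu1] at hu
    have hu2 := hu.1
    simp only [Complex.zero_re, Complex.sub_re] at hu2
    rw [hq1, hτ]
    simp only [Complex.sub_re, Complex.add_re, Complex.one_re]
    rw [hrdef] at hsucc
    linarith
  -- Cauchy-Schwarz for t1
  have habs1 : ‖t1‖ ≤ Real.sqrt ε := by
    have e := trace_cauchy_schwarz (R * C) (R * B)
    have eX : ((R * C)ᴴ * (R * B)).trace = t1 := by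
      rw [ht1def]
      simp only [Matrix.conjTranspose_mul, hChe, hRhe, Matrix.mul_assoc, hRRX]
    have eXX : ((R * C)ᴴ * (R * C)).trace = 1 := by
      rw [show (R * C)ᴴ * (R * C) = (C * R) * (R * C) by
        rw [Matrix.conjTranspose_mul, hChe, hRhe]]
      rw [trace_mul_comm (C * R) (R * C)]
      rw [show (R * C) * (C * R) = ρ by simp only [Matrix.mul_assoc, hCCX, hRR]]
      exact hτ
    have eYY : ((R * B)ᴴ * (R * B)).trace = q := by
      rw [show (R * B)ᴴ * (R * B) = (B * R) * (R * B) by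
        rw [Matrix.conjTranspose_mul, hBhe, hRhe]]
      rw [trace_mul_comm (B * R) (R * B)]
      rw [show (R * B) * (B * R) = R * (B * (B * R)) by simp only [Matrix.mul_assoc]]
      rw [trace_mul_comm R (B * (B * R))]
      rw [show (B * (B * R)) * R = B * (B * ρ) by simp only [Matrix.mul_assoc, hRR]]
    rw [eX, eXX, eYY] at e
    simp only [Complex.one_re, Real.sqrt_one, one_mul] at e
    exact e.trans (Real.sqrt_le_sqrt hq)
  -- Cauchy-Schwarz for t2
  have habs2 : ‖t2‖ ≤ Real.sqrt ε := by
    have e := trace_cauchy_schwarz (R * (B * C)) (R * S)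
    have eX : ((R * (B * C))ᴴ * (R * S)).trace = t2 := by
      rw [ht2def]
      simp only [Matrix.conjTranspose_mul, hChe, hBhe, hRhe, Matrix.mul_assoc, hRRX]
    have eXX : ((R * (B * C))ᴴ * (R * (B * C))).trace = q := by
      rw [show (R * (B * C))ᴴ * (R * (B * C)) = C * (B * (ρ * (B * C))) by
        simp only [Matrix.conjTranspose_mul, hChe, hBhe, hRhe, Matrix.mul_assoc, hRRX]]
      rw [trace_mul_comm C (B * (ρ * (B * C)))]
      rw [show (B * (ρ * (B * C))) * C = B * (ρ * B) by
        simp only [Matrix.mul_assoc, hCC, Matrix.mul_one]]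
      rw [hqdef, ← Matrix.mul_assoc, trace_mul_cycle, Matrix.mul_assoc]
    have eYY : ((R * S)ᴴ * (R * S)).trace = (Λ * ρ).trace := by
      rw [show (R * S)ᴴ * (R * S) = (S * R) * (R * S) by
        rw [Matrix.conjTranspose_mul, hShe, hRhe]]
      rw [trace_mul_comm (S * R) (R * S)]
      rw [show (R * S) * (S * R) = R * (Λ * R) by simp only [Matrix.mul_assoc, hSSX]]
      rw [trace_mul_comm R (Λ * R)]
      rw [show (Λ * R) * R = Λ * ρ by simp only [Matrix.mul_assoc, hRR]]
    rw [eX, eXX, eYY] at e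
    have h1 : Real.sqrt q.re ≤ Real.sqrt ε := Real.sqrt_le_sqrt hq
    have h2 : Real.sqrt ((Λ * ρ).trace).re ≤ 1 := by
      rw [show (1 : ℝ) = Real.sqrt 1 by rw [Real.sqrt_one]]
      exact Real.sqrt_le_sqrt hr1
    calc ‖t2‖ ≤ Real.sqrt q.re * Real.sqrt ((Λ * ρ).trace).re := e
      _ ≤ Real.sqrt ε * 1 := by
          exact mul_le_mul h1 h2 (Real.sqrt_nonneg _) (Real.sqrt_nonneg _)
      _ = Real.sqrt ε := mul_one _
  -- conclusion
  have hfin : (∑ i, |lam i|) = ((C * A).trace).re := by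
    rw [hCA, Complex.ofReal_re]
  rw [hfin, hdecomp, trace_add, ← ht1def, ← ht2def, Complex.add_re]
  have hre1 := Complex.re_le_norm t1
  have hre2 := Complex.re_le_norm t2
  linarith
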